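/- If (G,C) has exactly k distinct blocks, then every selective subset of (G,C) has cardinality at least k. -/

import Mathlib

/-- The set of nearest neighbors of `v` in `U` with respect to hop-distance in `G`:
`N̂(v,U) = {u ∈ U : d(v,u) = min_{w ∈ U} d(v,w)}` (empty if `U` is empty). -/
def NearestSet {V : Type*} (G : SimpleGraph V) (v : V) (U : Set V) : Set V :=
  {u | u ∈ U ∧ ∀ w ∈ U, G.dist v u ≤ G.dist v w}

/-- `S` is a selective subset of `(G, C)`: every vertex `v` has, among its nearest
neighbors in `S ∪ (V ∖ V_{C v})`, at least one vertex of its own color. -/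
def IsSelective {V α : Type*} (G : SimpleGraph V) (C : V → α) (S : Set V) : Prop :=
  ∀ v : V, ∃ u ∈ NearestSet G v (S ∪ {w | C w ≠ C v}), C u = C v

/-- The subgraph of `G` keeping only edges between vertices of the same color. -/
def sameColorGraph {V α : Type*} (G : SimpleGraph V) (C : V → α) : SimpleGraph V where
  Adj u w := G.Adj u w ∧ C u = C w
  symm := ⟨fun _ _ h => ⟨h.1.symm, h.2.symm⟩⟩
  loopless := ⟨fun u h => G.loopless.irrefl u h.1⟩

/-- A block of `(G, C)` is a maximal monochromatic connected set of vertices, i.e. a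
connected component of the subgraph induced by one color class. -/
def IsBlock {V α : Type*} (G : SimpleGraph V) (C : V → α) (B : Set V) : Prop :=
  ∃ v : V, B = {u | (sameColorGraph G C).Reachable u v}

/-- Key lemma: if `u ∈ S` has the same color as `v` and is at least as close to `v` as any
vertex of `S ∪ {w | C w ≠ C v}`, then `u` is reachable from `v` in the same-color graph. -/
lemma key_reach {V α : Type*} (G : SimpleGraph V) (hconn : G.Connected) (C : V → α)
    (S : Set V) :
    ∀ n (v u : V), u ∈ S → C u = C v →
      (∀ w ∈ S ∪ {w | C w ≠ C v}, G.dist v u ≤ G.dist v w) → G.dist v u = n →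
      (sameColorGraph G C).Reachable v u := by
  intro n
  induction n using Nat.strong_induction_on with
  | _ n ih =>
    intro v u huS huv hmin hd
    obtain ⟨p, hp⟩ := (hconn v u).exists_walk_length_eq_dist
    cases p with
    | nil => exact SimpleGraph.Reachable.refl _
    | @cons _ x _ h q =>
      simp only [SimpleGraph.Walk.length_cons] at hp
      have hvx1 : G.dist v x ≤ 1 := by
        simpa using G.dist_le (SimpleGraph.Walk.cons h SimpleGraph.Walk.nil)
      -- Step 1: C x = C v
      have hcx : C x = C v := by
        by_contra hne
        have hle : G.dist v u ≤ G.dist v x := hmin x (Or.inr hne)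
        have h1 : G.dist v u ≤ 1 := hle.trans hvx1
        have hq0 : q.length = 0 := by omega
        have : x = u := SimpleGraph.Walk.eq_of_length_eq_zero hq0
        exact hne (this ▸ huv)
      -- Step 2: G.dist x u = q.length
      have hxu_le : G.dist x u ≤ q.length := G.dist_le q
      have htri : G.dist v u ≤ 1 + G.dist x u :=
        (hconn.dist_triangle (v := x)).trans (by omega)
      have hxu : G.dist x u = q.length := by omega
      -- Step 3: minimality at x
      have hmin' : ∀ w ∈ S ∪ {w | C w ≠ C x}, G.dist x u ≤ G.dist x w := by
        intro w hw
        have hw' : w ∈ S ∪ {w | C w ≠ C v} := by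
          rcases hw with hw | hw
          · exact Or.inl hw
          · exact Or.inr (by simpa [hcx] using hw)
        have h1 : G.dist v u ≤ G.dist v w := hmin w hw'
        have h2 : G.dist v w ≤ 1 + G.dist x w :=
          (hconn.dist_triangle (v := x)).trans (by omega)
        omega
      have hreach : (sameColorGraph G C).Reachable x u :=
        ih q.length (by omega) x u huS (huv.trans hcx.symm) hmin' hxu
      exact (SimpleGraph.Adj.reachable (G := sameColorGraph G C) ⟨h, hcx.symm⟩).trans hreach

/-- Every block contains a vertex of a selective set. -/
lemma block_meets {V α : Type*} (G : SimpleGraph V) (hconn : G.Connected) (C : V → α)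
    (S : Set V) (hS : IsSelective G C S) {B : Set V} (hB : IsBlock G C B) :
    ∃ u ∈ B, u ∈ S := by
  obtain ⟨v, rfl⟩ := hB
  obtain ⟨u, ⟨huU, hmin⟩, huv⟩ := hS v
  have huS : u ∈ S := by
    rcases huU with h | h
    · exact h
    · exact absurd huv h
  have hreach : (sameColorGraph G C).Reachable v u :=
    key_reach G hconn C S (G.dist v u) v u huS huv hmin rfl
  exact ⟨u, hreach.symm, huS⟩

/-- If `(G,C)` has exactly `k` distinct blocks, then every selective subset of `(G,C)`
has cardinality at least `k`. -/
theorem stmt_3 {V : Type*} [Fintype V] {c : ℕ} (G : SimpleGraph V) (hconn : G.Connected)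
    (C : V → Fin c) (k : ℕ) (hk : {B : Set V | IsBlock G C B}.ncard = k)
    (S : Set V) (hS : IsSelective G C S) :
    k ≤ S.ncard := by
  classical
  by_cases hne : {B : Set V | IsBlock G C B}.Nonempty
  · obtain ⟨B₀, v₀, _⟩ := hne
    set f : Set V → V := fun B =>
      if h : ∃ u ∈ B, u ∈ S then h.choose else v₀ with hf
    have hmaps : ∀ B ∈ {B : Set V | IsBlock G C B}, f B ∈ S := by
      intro B hB
      have h := block_meets G hconn C S hS hB
      simp only [hf, dif_pos h]
      exact h.choose_spec.2
    have hmem : ∀ B ∈ {B : Set V | IsBlock G C B}, f B ∈ B := by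
      intro B hB
      have h := block_meets G hconn C S hS hB
      simp only [hf, dif_pos h]
      exact h.choose_spec.1
    have hinj : Set.InjOn f {B : Set V | IsBlock G C B} := by
      intro B1 hB1 B2 hB2 hfe
      obtain ⟨v1, rfl⟩ := hB1
      obtain ⟨v2, rfl⟩ := hB2
      have h1 := hmem _ ⟨v1, rfl⟩
      have h2 := hmem _ ⟨v2, rfl⟩
      rw [hfe] at h1
      ext w
      constructor
      · intro hw
        exact Set.mem_setOf.mpr ((Set.mem_setOf.mp hw).trans (h1.symm.trans h2))
      · intro hw
        exact Set.mem_setOf.mpr ((Set.mem_setOf.mp hw).trans (h2.symm.trans h1))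
    calc k = {B : Set V | IsBlock G C B}.ncard := hk.symm
      _ ≤ S.ncard := Set.ncard_le_ncard_of_injOn f hmaps hinj S.toFinite
  · rw [Set.not_nonempty_iff_eq_empty] at hne
    rw [hne, Set.ncard_empty] at hk
    omega
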